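/- Fix γ > 0. There exists M_γ ∈ ℕ such that for every integer k ≥ M_γ and all f, g ∈ E with f(x) = Σ_{n=0}^∞ (a_n/n!) x^n and g(x) = Σ_{n=0}^∞ (b_n/n!) x^n (a_n, b_n ∈ {0,1}): if ρ_1(f,g) < ξ_{k+1}, then a_j = b_j for every j = 0, 1, …, k. -/

import Mathlib

open MeasureTheory Set Filter
open scoped ENNReal Topology

/-- The `L^p` distance of two functions over the interval `[a, b]`. -/
noncomputable def rho (a b : ℝ) (p : ℝ≥0∞) (f g : ℝ → ℝ) : ℝ :=
  (eLpNorm (fun x => f x - g x) p (volume.restrict (Icc a b))).toReal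

/-- A sequence taking values in `{0, 1}`. -/
def IsBinary (a : ℕ → ℝ) : Prop := ∀ n, a n = 0 ∨ a n = 1

/-- The function `x ↦ Σ aₙ/n! xⁿ` attached to a coefficient sequence; elements of `E`
are exactly the functions `fseq a` with `a` binary. -/
noncomputable def fseq (a : ℕ → ℝ) : ℝ → ℝ :=
  fun x => ∑' n : ℕ, a n / (Nat.factorial n : ℝ) * x ^ n

/-- `ζ_k = Σ_{i ≥ k} γ^i/i!`. -/
noncomputable def zeta (γ : ℝ) (k : ℕ) : ℝ :=
  ∑' i : ℕ, γ ^ (k + i) / (Nat.factorial (k + i) : ℝ)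

/-- `ξ_k = γ^k/k! − Σ_{i ≥ k+1} γ^i/i!`. -/
noncomputable def xi (γ : ℝ) (k : ℕ) : ℝ :=
  γ ^ k / (Nat.factorial k : ℝ) - zeta γ (k + 1)

lemma exp_eq_tsum' (x : ℝ) : Real.exp x = ∑' n : ℕ, x ^ n / (Nat.factorial n : ℝ) := by
  rw [Real.exp_eq_exp_ℝ, NormedSpace.exp_eq_tsum_div]

lemma summable_tail (x : ℝ) (n : ℕ) :
    Summable (fun i : ℕ => x ^ (n + i) / (Nat.factorial (n + i) : ℝ)) :=
  ((summable_nat_add_iff n).mpr (Real.summable_pow_div_factorial x)).congr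
    (fun i => by rw [Nat.add_comm])

lemma zeta_eq (x : ℝ) (n : ℕ) :
    zeta x n = Real.exp x - ∑ i ∈ Finset.range n, x ^ i / (Nat.factorial i : ℝ) := by
  have h := Summable.sum_add_tsum_nat_add n (Real.summable_pow_div_factorial x)
  rw [exp_eq_tsum']
  have : zeta x n = ∑' i : ℕ, x ^ (i + n) / (Nat.factorial (i + n) : ℝ) := by
    unfold zeta; exact tsum_congr (fun i => by rw [Nat.add_comm])
  rw [this]; linarith

lemma zeta_nonneg (x : ℝ) (hx : 0 ≤ x) (n : ℕ) : 0 ≤ zeta x n :=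
  tsum_nonneg (fun i => by positivity)

lemma xi_le_pow (x : ℝ) (hx : 0 ≤ x) (k : ℕ) : xi x k ≤ x ^ k / (Nat.factorial k : ℝ) := by
  unfold xi; linarith [zeta_nonneg x hx (k+1)]

lemma xi_anti (γ : ℝ) (hγ : 0 < γ) {m n : ℕ} (h2 : 2 * γ ≤ m + 1) (hmn : m ≤ n) :
    xi γ n ≤ xi γ m := by
  induction n, hmn using Nat.le_induction with
  | base => exact le_rfl
  | succ n hmn ih =>
    refine le_trans ?_ ih
    have hn1 : 2 * γ ≤ n + 1 := le_trans h2 (by exact_mod_cast by omega)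
    have hfac : (0:ℝ) < Nat.factorial n := by positivity
    have hkey : xi γ (n+1) ≤ xi γ n := by
      simp only [xi, zeta_eq]
      rw [Finset.sum_range_succ]
      have e1 : (Nat.factorial (n+1) : ℝ) = (n+1) * Nat.factorial n := by
        rw [Nat.factorial_succ]; push_cast; ring
      have hpow : 0 ≤ γ ^ n := by positivity
      have : 2 * (γ ^ (n+1) / (Nat.factorial (n+1) : ℝ)) ≤ γ ^ n / Nat.factorial n := by
        rw [e1, pow_succ, ← mul_div_assoc]
        rw [div_le_div_iff₀ (by positivity) hfac]
        have h2n : 2 * γ ≤ (n:ℝ) + 1 := hn1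
        nlinarith [mul_le_mul_of_nonneg_left h2n (mul_nonneg hpow hfac.le)]
      linarith
    linarith

lemma binary_abs_le {a : ℕ → ℝ} (ha : IsBinary a) (n : ℕ) : |a n| ≤ 1 := by
  rcases ha n with h | h <;> rw [h] <;> norm_num

lemma binary_sub_abs_le {a b : ℕ → ℝ} (ha : IsBinary a) (hb : IsBinary b) (n : ℕ) :
    |a n - b n| ≤ 1 := by
  rcases ha n with h | h <;> rcases hb n with h' | h' <;> rw [h, h'] <;> norm_num

lemma binary_sub_abs_eq {a b : ℕ → ℝ} (ha : IsBinary a) (hb : IsBinary b) {n : ℕ}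
    (hne : a n ≠ b n) : |a n - b n| = 1 := by
  rcases ha n with h | h <;> rcases hb n with h' | h' <;> rw [h, h'] <;>
    simp_all

lemma summable_coef (c : ℕ → ℝ) (hc : ∀ n, |c n| ≤ 1) (x : ℝ) (hx : 0 ≤ x) :
    Summable (fun n => c n / (Nat.factorial n : ℝ) * x ^ n) := by
  apply Summable.of_norm
  refine Summable.of_nonneg_of_le (fun n => norm_nonneg _) ?_ (Real.summable_pow_div_factorial x)
  intro n
  have h1 : ‖c n / (Nat.factorial n : ℝ) * x ^ n‖ = |c n| * (x ^ n / Nat.factorial n) := by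
    rw [Real.norm_eq_abs, abs_mul, abs_div, abs_pow, abs_of_nonneg hx]
    have : |(Nat.factorial n : ℝ)| = Nat.factorial n := abs_of_nonneg (by positivity)
    rw [this]; ring
  rw [h1]
  calc |c n| * (x ^ n / Nat.factorial n) ≤ 1 * (x ^ n / Nat.factorial n) := by
        have : (0:ℝ) ≤ x ^ n / Nat.factorial n := by positivity
        exact mul_le_mul_of_nonneg_right (hc n) this
    _ = x ^ n / Nat.factorial n := one_mul _

lemma fseq_sub (a b : ℕ → ℝ) (ha : IsBinary a) (hb : IsBinary b) (x : ℝ) (hx : 0 ≤ x) :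
    fseq a x - fseq b x = ∑' n, (a n - b n) / (Nat.factorial n : ℝ) * x ^ n := by
  unfold fseq
  rw [← Summable.tsum_sub (summable_coef a (binary_abs_le ha) x hx) (summable_coef b (binary_abs_le hb) x hx)]
  exact tsum_congr (fun n => by ring)

lemma fseq_abs_le_exp {a : ℕ → ℝ} (ha : IsBinary a) (x : ℝ) (hx : 0 ≤ x) :
    |fseq a x| ≤ Real.exp x := by
  unfold fseq
  rw [exp_eq_tsum' x]
  have hs := summable_coef a (binary_abs_le ha) x hx
  calc |∑' n, a n / (Nat.factorial n : ℝ) * x ^ n| ≤ ∑' n, ‖a n / (Nat.factorial n : ℝ) * x ^ n‖ :=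
        norm_tsum_le_tsum_norm hs.norm
    _ ≤ ∑' n, x ^ n / (Nat.factorial n : ℝ) := by
        apply Summable.tsum_le_tsum _ hs.norm (Real.summable_pow_div_factorial x)
        intro n
        have h1 : ‖a n / (Nat.factorial n : ℝ) * x ^ n‖ = |a n| * (x ^ n / Nat.factorial n) := by
          rw [Real.norm_eq_abs, abs_mul, abs_div, abs_pow, abs_of_nonneg hx,
            abs_of_nonneg (show (0:ℝ) ≤ (Nat.factorial n : ℝ) by positivity)]
          ring
        rw [h1]
        calc |a n| * (x ^ n / Nat.factorial n) ≤ 1 * (x ^ n / Nat.factorial n) := by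
              have : (0:ℝ) ≤ x ^ n / Nat.factorial n := by positivity
              exact mul_le_mul_of_nonneg_right (binary_abs_le ha n) this
          _ = x ^ n / Nat.factorial n := one_mul _

lemma key_pointwise {a b : ℕ → ℝ} (ha : IsBinary a) (hb : IsBinary b) {j : ℕ}
    (hj : a j ≠ b j) (hmin : ∀ n < j, a n = b n) (x : ℝ) (hx : 0 ≤ x) :
    x ^ j / (Nat.factorial j : ℝ) - zeta x (j + 1) ≤ |fseq a x - fseq b x| := by
  set S : ℕ → ℝ := fun n => (a n - b n) / (Nat.factorial n : ℝ) * x ^ n with hS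
  have hc : ∀ n, |a n - b n| ≤ 1 := binary_sub_abs_le ha hb
  have hsum : Summable S := summable_coef _ hc x hx
  have hsplit := Summable.sum_add_tsum_nat_add (j + 1) hsum
  have hfs : fseq a x - fseq b x = ∑' n, S n := fseq_sub a b ha hb x hx
  -- partial sum equals S j
  have hps : ∑ i ∈ Finset.range (j + 1), S i = S j := by
    apply Finset.sum_eq_single_of_mem j (Finset.self_mem_range_succ j)
    intro n hn hne
    have hnj : n < j := lt_of_le_of_ne (Nat.lt_succ_iff.mp (Finset.mem_range.mp hn)) hne
    simp [hS, hmin n hnj]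
  -- |S j| = x^j / j!
  have hSj : |S j| = x ^ j / (Nat.factorial j : ℝ) := by
    rw [hS]
    rw [abs_mul, abs_div, abs_pow, abs_of_nonneg hx,
      abs_of_nonneg (show (0:ℝ) ≤ (Nat.factorial j : ℝ) by positivity),
      binary_sub_abs_eq ha hb hj]
    ring
  -- tail bound
  set R : ℝ := ∑' i, S (i + (j + 1)) with hR
  have htail_sum : Summable (fun i => S (i + (j + 1))) := (summable_nat_add_iff (j+1)).mpr hsum
  have hRle : |R| ≤ zeta x (j + 1) := by
    have h1 : |R| ≤ ∑' i, ‖S (i + (j + 1))‖ := norm_tsum_le_tsum_norm htail_sum.norm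
    refine h1.trans ?_
    unfold zeta
    apply Summable.tsum_le_tsum _ htail_sum.norm (summable_tail x (j+1))
    intro i
    have h2 : ‖S (i + (j+1))‖ = |a (i+(j+1)) - b (i+(j+1))| * (x ^ (i+(j+1)) / Nat.factorial (i+(j+1))) := by
      rw [hS, Real.norm_eq_abs, abs_mul, abs_div, abs_pow, abs_of_nonneg hx,
        abs_of_nonneg (show (0:ℝ) ≤ (Nat.factorial (i+(j+1)) : ℝ) by positivity)]
      ring
    rw [h2]
    have h3 : x ^ ((j+1) + i) / (Nat.factorial ((j+1) + i) : ℝ)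
        = x ^ (i + (j+1)) / (Nat.factorial (i + (j+1)) : ℝ) := by rw [Nat.add_comm]
    rw [h3]
    calc |a (i+(j+1)) - b (i+(j+1))| * (x ^ (i+(j+1)) / Nat.factorial (i+(j+1)))
        ≤ 1 * (x ^ (i+(j+1)) / Nat.factorial (i+(j+1))) := by
          have : (0:ℝ) ≤ x ^ (i+(j+1)) / Nat.factorial (i+(j+1)) := by positivity
          exact mul_le_mul_of_nonneg_right (hc _) this
      _ = _ := one_mul _
  have hdecomp : fseq a x - fseq b x = S j + R := by
    rw [hfs, ← hsplit, hps]
  rw [hdecomp]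
  have := abs_add_le (S j + R) (-R)
  have habs : |S j| ≤ |S j + R| + |R| := by
    calc |S j| = |(S j + R) + (-R)| := by ring_nf
      _ ≤ |S j + R| + |-R| := abs_add_le _ _
      _ = |S j + R| + |R| := by rw [abs_neg]
  linarith [hSj ▸ habs]

lemma xi_small_lower (t : ℝ) (ht0 : 0 < t) (ht3 : t ≤ 1/3) (j : ℕ) :
    (1/2) * (t ^ (j+1) / (Nat.factorial (j+1) : ℝ)) ≤ xi t (j+1) := by
  have ht1 : t < 1 := by linarith
  have hzle : zeta t (j + 2) ≤ (1/2) * (t ^ (j+1) / (Nat.factorial (j+1) : ℝ)) := by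
    have hgeo : Summable (fun i : ℕ => t ^ (j+1) / (Nat.factorial (j+1) : ℝ) * t ^ (i+1)) := by
      apply Summable.mul_left
      exact ((summable_geometric_of_lt_one ht0.le ht1).comp_injective (add_left_injective 1))
    have hterm : ∀ i : ℕ, t ^ ((j+2) + i) / (Nat.factorial ((j+2) + i) : ℝ)
        ≤ t ^ (j+1) / (Nat.factorial (j+1) : ℝ) * t ^ (i+1) := by
      intro i
      have hfle : (Nat.factorial (j+1) : ℝ) ≤ (Nat.factorial ((j+2)+i) : ℝ) := by
        exact_mod_cast Nat.factorial_le (by omega)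
      have hpow : t ^ ((j+2)+i) = t ^ (j+1) * t ^ (i+1) := by
        rw [← pow_add]; ring_nf
      have he : t ^ (j+1) / (Nat.factorial (j+1) : ℝ) * t ^ (i+1)
          = (t ^ (j+1) * t ^ (i+1)) / (Nat.factorial (j+1) : ℝ) := by ring
      rw [hpow, he]
      exact div_le_div_of_nonneg_left (by positivity) (by positivity) hfle
    calc zeta t (j+2) ≤ ∑' i : ℕ, t ^ (j+1) / (Nat.factorial (j+1) : ℝ) * t ^ (i+1) :=
          Summable.tsum_le_tsum hterm (summable_tail t (j+2)) hgeo
      _ = t ^ (j+1) / (Nat.factorial (j+1) : ℝ) * ∑' i : ℕ, t ^ (i+1) := tsum_mul_left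
      _ ≤ (1/2) * (t ^ (j+1) / (Nat.factorial (j+1) : ℝ)) := by
          have hgsum : ∑' i : ℕ, t ^ (i+1) = t * (1-t)⁻¹ := by
            have : ∑' i : ℕ, t ^ (i+1) = t * ∑' i : ℕ, t ^ i := by
              rw [← tsum_mul_left]
              exact tsum_congr (fun i => by rw [pow_succ]; ring)
            rw [this, tsum_geometric_of_lt_one ht0.le ht1]
          rw [hgsum]
          have h12 : t * (1-t)⁻¹ ≤ 1/2 := by
            rw [mul_inv_le_iff₀ (by linarith)]
            linarith
          have hnn : (0:ℝ) ≤ t ^ (j+1) / (Nat.factorial (j+1) : ℝ) := by positivity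
          calc t ^ (j+1) / (Nat.factorial (j+1) : ℝ) * (t * (1-t)⁻¹)
              ≤ t ^ (j+1) / (Nat.factorial (j+1) : ℝ) * (1/2) :=
                mul_le_mul_of_nonneg_left h12 hnn
            _ = (1/2) * (t ^ (j+1) / (Nat.factorial (j+1) : ℝ)) := by ring
  unfold xi
  linarith

lemma ofReal_integral_le_lintegral {α : Type*} [MeasurableSpace α] {ν : Measure α} {φ : α → ℝ}
    (hi : Integrable φ ν) :
    ENNReal.ofReal (∫ x, φ x ∂ν) ≤ ∫⁻ x, ENNReal.ofReal (φ x) ∂ν := by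
  have hmax : Integrable (fun x => max (φ x) 0) ν := hi.pos_part
  have h1 : ∫ x, φ x ∂ν ≤ ∫ x, max (φ x) 0 ∂ν :=
    integral_mono hi hmax (fun x => le_max_left _ _)
  calc ENNReal.ofReal (∫ x, φ x ∂ν) ≤ ENNReal.ofReal (∫ x, max (φ x) 0 ∂ν) :=
        ENNReal.ofReal_le_ofReal h1
    _ = ∫⁻ x, ENNReal.ofReal (max (φ x) 0) ∂ν :=
        ofReal_integral_eq_lintegral_ofReal hmax
          (Eventually.of_forall fun x => le_max_right _ _)
    _ = ∫⁻ x, ENNReal.ofReal (φ x) ∂ν := by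
        apply lintegral_congr
        intro x
        rcases le_total (φ x) 0 with h | h
        · simp [max_eq_right h, ENNReal.ofReal_of_nonpos h]
        · simp [max_eq_left h]

lemma integral_phi (t : ℝ) (ht0 : 0 < t) (j : ℕ) :
    ∫ x in Icc (0:ℝ) t, (x ^ j / (Nat.factorial j : ℝ) - Real.exp x
      + ∑ i ∈ Finset.range (j+1), x ^ i / (Nat.factorial i : ℝ)) = xi t (j+1) := by
  rw [integral_Icc_eq_integral_Ioc, ← intervalIntegral.integral_of_le ht0.le]
  have hpint : ∀ n : ℕ, IntervalIntegrable (fun x : ℝ => x ^ n / (Nat.factorial n : ℝ))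
      volume 0 t := fun n => ((continuous_pow n).div_const _).intervalIntegrable 0 t
  have hsumint : IntervalIntegrable
      (fun x : ℝ => ∑ i ∈ Finset.range (j+1), x ^ i / (Nat.factorial i : ℝ)) volume 0 t := by
    apply Continuous.intervalIntegrable
    exact continuous_finset_sum _ (fun i _ => (continuous_pow i).div_const _)
  rw [intervalIntegral.integral_add ((hpint j).sub (Real.continuous_exp.intervalIntegrable 0 t))
      hsumint,
    intervalIntegral.integral_sub (hpint j) (Real.continuous_exp.intervalIntegrable 0 t),
    intervalIntegral.integral_div, integral_pow, integral_exp,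
    intervalIntegral.integral_finset_sum (fun i _ => hpint i)]
  have hterm : ∀ i ∈ Finset.range (j+1),
      (∫ x in (0:ℝ)..t, x ^ i / (Nat.factorial i : ℝ)) = t ^ (i+1) / (Nat.factorial (i+1) : ℝ) := by
    intro i _
    rw [intervalIntegral.integral_div, integral_pow]
    rw [Nat.factorial_succ]
    push_cast
    rw [zero_pow (by omega)]
    field_simp
    ring
  rw [Finset.sum_congr rfl hterm]
  have hsum : ∑ i ∈ Finset.range (j+1), t ^ (i+1) / (Nat.factorial (i+1) : ℝ)
      = (∑ i ∈ Finset.range (j+2), t ^ i / (Nat.factorial i : ℝ)) - 1 := by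
    rw [Finset.sum_range_succ' (fun i => t ^ i / (Nat.factorial i : ℝ)) (j+1)]
    simp
  rw [hsum]
  unfold xi
  rw [zeta_eq]
  rw [zero_pow (by omega), Real.exp_zero]
  have hfac : (Nat.factorial (j+1) : ℝ) = (j+1) * Nat.factorial j := by
    rw [Nat.factorial_succ]; push_cast; ring
  rw [hfac]
  have h1 : (0:ℝ) < Nat.factorial j := by positivity
  field_simp
  ring

lemma rho_lower (γ t : ℝ) (ht0 : 0 < t) (htγ : t ≤ γ)
    (a b : ℕ → ℝ) (ha : IsBinary a) (hb : IsBinary b) {j : ℕ}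
    (hj : a j ≠ b j) (hmin : ∀ n < j, a n = b n) :
    xi t (j+1) ≤ rho 0 γ 1 (fseq a) (fseq b) := by
  set h : ℝ → ℝ := fun x => fseq a x - fseq b x with hdef
  set φ : ℝ → ℝ := fun x => x ^ j / (Nat.factorial j : ℝ) - Real.exp x
      + ∑ i ∈ Finset.range (j+1), x ^ i / (Nat.factorial i : ℝ) with hφdef
  have hφcont : Continuous φ := by
    apply Continuous.add
    · exact ((continuous_pow j).div_const _).sub Real.continuous_exp
    · exact continuous_finset_sum _ (fun i _ => (continuous_pow i).div_const _)
  have hφint : IntegrableOn φ (Icc 0 t) volume := hφcont.integrableOn_Icc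
  have hφeq : ∀ x : ℝ, φ x = x ^ j / (Nat.factorial j : ℝ) - zeta x (j+1) := by
    intro x; rw [hφdef]; simp only [zeta_eq]; ring
  -- chain of inequalities in ℝ≥0∞
  have hchain : ENNReal.ofReal (xi t (j+1)) ≤ eLpNorm h 1 (volume.restrict (Icc 0 γ)) := by
    rw [eLpNorm_one_eq_lintegral_enorm]
    calc ENNReal.ofReal (xi t (j+1))
        = ENNReal.ofReal (∫ x in Icc (0:ℝ) t, φ x) := by rw [integral_phi t ht0 j]
      _ ≤ ∫⁻ x in Icc (0:ℝ) t, ENNReal.ofReal (φ x) := ofReal_integral_le_lintegral hφint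
      _ ≤ ∫⁻ x in Icc (0:ℝ) t, (‖h x‖₊ : ℝ≥0∞) := by
          apply lintegral_mono_ae
          filter_upwards [ae_restrict_mem measurableSet_Icc] with x hx
          have hx0 : 0 ≤ x := hx.1
          have hkey := key_pointwise ha hb hj hmin x hx0
          rw [hφeq x]
          calc ENNReal.ofReal (x ^ j / (Nat.factorial j : ℝ) - zeta x (j+1))
              ≤ ENNReal.ofReal |h x| := ENNReal.ofReal_le_ofReal hkey
            _ = (‖h x‖₊ : ℝ≥0∞) := by rw [← Real.norm_eq_abs, ofReal_norm]; rfl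
      _ ≤ ∫⁻ x in Icc (0:ℝ) γ, (‖h x‖₊ : ℝ≥0∞) :=
          lintegral_mono' (Measure.restrict_mono (Icc_subset_Icc_right htγ) le_rfl) le_rfl
  -- finiteness
  have hγ0 : (0:ℝ) < γ := lt_of_lt_of_le ht0 htγ
  have hfin : eLpNorm h 1 (volume.restrict (Icc 0 γ)) ≠ ⊤ := by
    have hbd : ∀ᵐ x ∂(volume.restrict (Icc (0:ℝ) γ)), ‖h x‖ ≤ 2 * Real.exp γ := by
      filter_upwards [ae_restrict_mem measurableSet_Icc] with x hx
      have hx0 : 0 ≤ x := hx.1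
      have hxγ : x ≤ γ := hx.2
      have h1 := fseq_abs_le_exp ha x hx0
      have h2 := fseq_abs_le_exp hb x hx0
      have h3 : Real.exp x ≤ Real.exp γ := Real.exp_le_exp.mpr hxγ
      rw [Real.norm_eq_abs, hdef]
      calc |fseq a x - fseq b x| ≤ |fseq a x| + |fseq b x| := abs_sub _ _
        _ ≤ 2 * Real.exp γ := by linarith
    have hle := eLpNorm_le_of_ae_bound (p := 1) hbd
    refine (lt_of_le_of_lt hle ?_).ne
    apply ENNReal.mul_lt_top _ ENNReal.ofReal_lt_top
    apply ENNReal.rpow_lt_top_of_nonneg (by norm_num)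
    simp [Measure.restrict_apply_univ, Real.volume_Icc]
  -- conclude
  unfold rho
  rcases le_or_gt (xi t (j+1)) 0 with hxi | hxi
  · exact hxi.trans ENNReal.toReal_nonneg
  · have := ENNReal.toReal_mono hfin hchain
    rwa [ENNReal.toReal_ofReal hxi.le] at this


/-- Fix `γ > 0`. There is an `M_γ ∈ ℕ` such that for every `k ≥ M_γ`
and all `f = Σ aₙ/n! xⁿ`, `g = Σ bₙ/n! xⁿ` in `E` (binary coefficients): if
`ρ_1(f, g) < ξ_{k+1}`, then `a_j = b_j` for all `j = 0, 1, …, k`. -/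
theorem stmt13 (γ : ℝ) (hγ : 0 < γ) :
    ∃ M : ℕ, ∀ k : ℕ, M ≤ k → ∀ a b : ℕ → ℝ, IsBinary a → IsBinary b →
      rho 0 γ 1 (fseq a) (fseq b) < xi γ (k + 1) →
      ∀ j ≤ k, a j = b j := by
  classical
  set δ : ℝ := min γ (1/3) with hδdef
  have hδ0 : 0 < δ := lt_min hγ (by norm_num)
  have hδγ : δ ≤ γ := min_le_left _ _
  have hδ3 : δ ≤ 1/3 := min_le_right _ _
  have hδ1 : δ ≤ 1 := hδ3.trans (by norm_num)
  set M0 : ℕ := ⌈2 * γ⌉₊ with hM0def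
  have h2γ : 2 * γ ≤ M0 := Nat.le_ceil _
  set c : ℝ := (1/2) * (δ ^ (M0+1) / (Nat.factorial (M0+1) : ℝ)) with hcdef
  have hc0 : 0 < c := by positivity
  -- eventually γ^n/n! < c
  have htend : Tendsto (fun n : ℕ => γ ^ n / (Nat.factorial n : ℝ)) atTop (𝓝 0) :=
    FloorSemiring.tendsto_pow_div_factorial_atTop γ
  have hev : ∀ᶠ n in atTop, γ ^ n / (Nat.factorial n : ℝ) < c := by
    have := htend.eventually (gt_mem_nhds hc0)
    exact this
  obtain ⟨M1, hM1⟩ := eventually_atTop.mp hev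
  refine ⟨max M0 M1, fun k hk a b ha hb hρ => ?_⟩
  by_contra hcon
  push_neg at hcon
  obtain ⟨j, hjk, hjne⟩ := hcon
  have hP : ∃ n, a n ≠ b n := ⟨j, hjne⟩
  set j0 := Nat.find hP with hj0def
  have hj0ne : a j0 ≠ b j0 := Nat.find_spec hP
  have hj0le : j0 ≤ j := Nat.find_min' hP hjne
  have hmin : ∀ n < j0, a n = b n := fun n hn => not_not.mp (Nat.find_min hP hn)
  have hj0k : j0 ≤ k := hj0le.trans hjk
  rcases le_or_gt M0 j0 with hcase | hcase
  · -- large case: t = γ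
    have h1 : xi γ (j0+1) ≤ rho 0 γ 1 (fseq a) (fseq b) :=
      rho_lower γ γ hγ le_rfl a b ha hb hj0ne hmin
    have h2 : xi γ (k+1) ≤ xi γ (j0+1) := by
      apply xi_anti γ hγ _ (by omega)
      have : (M0:ℝ) ≤ (j0:ℝ) := by exact_mod_cast hcase
      push_cast
      linarith
    linarith
  · -- small case: t = δ
    have h1 : xi δ (j0+1) ≤ rho 0 γ 1 (fseq a) (fseq b) :=
      rho_lower γ δ hδ0 hδγ a b ha hb hj0ne hmin
    have h2 : c ≤ (1/2) * (δ ^ (j0+1) / (Nat.factorial (j0+1) : ℝ)) := by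
      rw [hcdef]
      have hp : δ ^ (M0+1) ≤ δ ^ (j0+1) := pow_le_pow_of_le_one hδ0.le hδ1 (by omega)
      have hf : (Nat.factorial (j0+1) : ℝ) ≤ (Nat.factorial (M0+1) : ℝ) := by
        exact_mod_cast Nat.factorial_le (by omega)
      have hf0 : (0:ℝ) < Nat.factorial (j0+1) := by positivity
      have hd : δ ^ (M0+1) / (Nat.factorial (M0+1) : ℝ)
          ≤ δ ^ (j0+1) / (Nat.factorial (j0+1) : ℝ) :=
        div_le_div₀ (by positivity) hp hf0 hf
      linarith
    have h3 : xi δ (j0+1) ≥ c := le_trans h2 (xi_small_lower δ hδ0 hδ3 j0)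
    have h4 : xi γ (k+1) ≤ γ ^ (k+1) / (Nat.factorial (k+1) : ℝ) := xi_le_pow γ hγ.le (k+1)
    have h5 : γ ^ (k+1) / (Nat.factorial (k+1) : ℝ) < c := by
      apply hM1
      have := le_max_right M0 M1
      omega
    linarith
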